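/- Let R₀ > 0, y = (x_ref, y_ref) ∈ ℝ² with |y| ≤ R₀/2, and r_θ = (R₀ cos θ, R₀ sin θ). Define d(θ) = |r_θ - y|. Then for every k ≥ 1, d^{(2k)}(θ) = -(-1)^k (x_ref cos θ + y_ref sin θ) + E_k(θ) where |E_k(θ)| ≤ C_k · |y|²/R₀ uniformly in θ. -/

import Mathlib

open Real

noncomputable def uu (a b θ : ℝ) : ℝ := a * Real.cos θ + b * Real.sin θ
noncomputable def vv (a b θ : ℝ) : ℝ := b * Real.cos θ - a * Real.sin θ
noncomputable def DD (a b θ : ℝ) : ℝ :=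
  Real.sqrt ((Real.cos θ - a) ^ 2 + (Real.sin θ - b) ^ 2)

lemma ww_eq (a b θ : ℝ) :
    (Real.cos θ - a) ^ 2 + (Real.sin θ - b) ^ 2
      = 1 - 2 * uu a b θ + (a ^ 2 + b ^ 2) := by
  have h := Real.sin_sq_add_cos_sq θ
  simp only [uu]; nlinarith [h]

lemma uu_sq_le (a b θ : ℝ) : (uu a b θ) ^ 2 ≤ a ^ 2 + b ^ 2 := by
  have h := Real.sin_sq_add_cos_sq θ
  simp only [uu]
  nlinarith [sq_nonneg (a * Real.sin θ - b * Real.cos θ)]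

lemma vv_sq_le (a b θ : ℝ) : (vv a b θ) ^ 2 ≤ a ^ 2 + b ^ 2 := by
  have h := Real.sin_sq_add_cos_sq θ
  simp only [vv]
  nlinarith [sq_nonneg (a * Real.cos θ + b * Real.sin θ)]

lemma abs_uu_le (a b θ : ℝ) : |uu a b θ| ≤ Real.sqrt (a ^ 2 + b ^ 2) := by
  rw [← Real.sqrt_sq_eq_abs]; exact Real.sqrt_le_sqrt (uu_sq_le a b θ)

lemma abs_vv_le (a b θ : ℝ) : |vv a b θ| ≤ Real.sqrt (a ^ 2 + b ^ 2) := by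
  rw [← Real.sqrt_sq_eq_abs]; exact Real.sqrt_le_sqrt (vv_sq_le a b θ)

lemma sqrt_s_le {a b : ℝ} (hs : a ^ 2 + b ^ 2 ≤ 1 / 4) :
    Real.sqrt (a ^ 2 + b ^ 2) ≤ 1 / 2 := by
  have : Real.sqrt (a ^ 2 + b ^ 2) ≤ Real.sqrt (1 / 4) := Real.sqrt_le_sqrt hs
  rwa [show (1 / 4 : ℝ) = (1 / 2) ^ 2 by norm_num, Real.sqrt_sq (by norm_num)] at this

lemma w_ge {a b : ℝ} (hs : a ^ 2 + b ^ 2 ≤ 1 / 4) (θ : ℝ) :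
    1 / 4 ≤ (Real.cos θ - a) ^ 2 + (Real.sin θ - b) ^ 2 := by
  rw [ww_eq]
  nlinarith [uu_sq_le a b θ, sq_nonneg (uu a b θ - 1 / 2)]

lemma DD_ge {a b : ℝ} (hs : a ^ 2 + b ^ 2 ≤ 1 / 4) (θ : ℝ) : 1 / 2 ≤ DD a b θ := by
  rw [DD]
  rw [show (1 / 2 : ℝ) = Real.sqrt (1 / 4) by
    rw [show (1 / 4 : ℝ) = (1 / 2) ^ 2 by norm_num, Real.sqrt_sq (by norm_num)]]
  exact Real.sqrt_le_sqrt (w_ge hs θ)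

lemma DD_pos {a b : ℝ} (hs : a ^ 2 + b ^ 2 ≤ 1 / 4) (θ : ℝ) : 0 < DD a b θ :=
  lt_of_lt_of_le (by norm_num) (DD_ge hs θ)

lemma DD_ne {a b : ℝ} (hs : a ^ 2 + b ^ 2 ≤ 1 / 4) (θ : ℝ) : DD a b θ ≠ 0 :=
  (DD_pos hs θ).ne'

lemma DD_sq (a b θ : ℝ) :
    (DD a b θ) ^ 2 = 1 - 2 * uu a b θ + (a ^ 2 + b ^ 2) := by
  rw [DD, Real.sq_sqrt (by positivity), ww_eq]

lemma hasDerivAt_uu (a b θ : ℝ) : HasDerivAt (uu a b) (vv a b θ) θ := by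
  have h := ((Real.hasDerivAt_cos θ).const_mul a).add ((Real.hasDerivAt_sin θ).const_mul b)
  refine h.congr_deriv ?_
  simp [vv]; ring

lemma hasDerivAt_vv (a b θ : ℝ) : HasDerivAt (vv a b) (-uu a b θ) θ := by
  have h := ((Real.hasDerivAt_cos θ).const_mul b).sub ((Real.hasDerivAt_sin θ).const_mul a)
  refine h.congr_deriv ?_
  simp [uu]; ring

lemma hasDerivAt_DD {a b : ℝ} (hs : a ^ 2 + b ^ 2 ≤ 1 / 4) (θ : ℝ) :
    HasDerivAt (DD a b) (-vv a b θ / DD a b θ) θ := by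
  have hc : HasDerivAt (fun φ => (Real.cos φ - a) ^ 2 + (Real.sin φ - b) ^ 2)
      (2 * (Real.cos θ - a) ^ 1 * (-Real.sin θ) + 2 * (Real.sin θ - b) ^ 1 * Real.cos θ) θ := by
    exact (((Real.hasDerivAt_cos θ).sub_const a).pow 2).add
      (((Real.hasDerivAt_sin θ).sub_const b).pow 2)
  have hw0 : (Real.cos θ - a) ^ 2 + (Real.sin θ - b) ^ 2 ≠ 0 := by
    have := w_ge hs θ; linarith
  have h := hc.sqrt hw0
  refine h.congr_deriv ?_
  rw [show Real.sqrt ((Real.cos θ - a) ^ 2 + (Real.sin θ - b) ^ 2) = DD a b θ from rfl]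
  have hD := DD_ne hs θ
  field_simp [vv]
  simp only [vv]
  ring

noncomputable def Tm (a b : ℝ) (t : ℝ × ℕ × ℕ × ℕ) (θ : ℝ) : ℝ :=
  t.1 * uu a b θ ^ t.2.1 * vv a b θ ^ t.2.2.1 / DD a b θ ^ t.2.2.2

def step (t : ℝ × ℕ × ℕ × ℕ) : List (ℝ × ℕ × ℕ × ℕ) :=
  [((t.2.1 : ℝ) * t.1, t.2.1 - 1, t.2.2.1 + 1, t.2.2.2),
   (-((t.2.2.1 : ℝ) * t.1), t.2.1 + 1, t.2.2.1 - 1, t.2.2.2),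
   ((t.2.2.2 : ℝ) * t.1, t.2.1, t.2.2.1 + 1, t.2.2.2 + 2)]

lemma step_inv {t t' : ℝ × ℕ × ℕ × ℕ} (h : t' ∈ step t)
    (ht : 2 ≤ t.2.1 + t.2.2.1) : 2 ≤ t'.2.1 + t'.2.2.1 := by
  simp only [step, List.mem_cons, List.mem_singleton] at h
  rcases h with rfl | rfl | rfl | h <;> simp_all <;> omega

lemma hasDerivAt_Tm {a b : ℝ} (hs : a ^ 2 + b ^ 2 ≤ 1 / 4) (t : ℝ × ℕ × ℕ × ℕ) (θ : ℝ) :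
    HasDerivAt (fun φ => Tm a b t φ)
      (((step t).map (fun t' => Tm a b t' θ)).sum) θ := by
  obtain ⟨c, p, q, e⟩ := t
  have hu := hasDerivAt_uu a b θ
  have hv := hasDerivAt_vv a b θ
  have hD := hasDerivAt_DD hs θ
  have hD0 := DD_ne hs θ
  have h := (((hu.pow p).const_mul c).mul (hv.pow q)).div (hD.pow e) (pow_ne_zero _ hD0)
  refine h.congr_deriv ?_
  simp only [Pi.mul_apply, Pi.pow_apply, Pi.div_apply]
  simp only [step, List.map_cons, List.map_nil, List.sum_cons, List.sum_nil, Tm]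
  rcases p with _ | p <;> rcases q with _ | q <;> rcases e with _ | e <;>
    (push_cast
     simp only [Nat.add_sub_cancel, pow_succ, pow_zero]
     field_simp
     try ring)

lemma hasDerivAt_sum {a b : ℝ} (hs : a ^ 2 + b ^ 2 ≤ 1 / 4) (l : List (ℝ × ℕ × ℕ × ℕ)) (θ : ℝ) :
    HasDerivAt (fun φ => (l.map (fun t => Tm a b t φ)).sum)
      (((l.flatMap step).map (fun t => Tm a b t θ)).sum) θ := by
  induction l with
  | nil => simpa using hasDerivAt_const θ (0 : ℝ)
  | cons t l ih =>
    simp only [List.map_cons, List.sum_cons, List.flatMap_cons, List.map_append, List.sum_append]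
    exact (hasDerivAt_Tm hs t θ).add ih

noncomputable def cu (n : ℕ) : ℝ := if n % 4 = 2 then 1 else if n % 4 = 0 then -1 else 0
noncomputable def cv (n : ℕ) : ℝ := if n % 4 = 1 then -1 else if n % 4 = 3 then 1 else 0

lemma cu_succ (n : ℕ) : cu (n + 1) = -cv n := by
  have h4 : (n + 1) % 4 = (n % 4 + 1) % 4 := by omega
  have h : n % 4 = 0 ∨ n % 4 = 1 ∨ n % 4 = 2 ∨ n % 4 = 3 := by omega
  rcases h with h | h | h | h <;> simp [cu, cv, h4, h]

lemma cv_succ (n : ℕ) : cv (n + 1) = cu n := by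
  have h4 : (n + 1) % 4 = (n % 4 + 1) % 4 := by omega
  have h : n % 4 = 0 ∨ n % 4 = 1 ∨ n % 4 = 2 ∨ n % 4 = 3 := by omega
  rcases h with h | h | h | h <;> simp [cu, cv, h4, h]

lemma cu_two_mul (k : ℕ) : cu (2 * k) = -(-1 : ℝ) ^ k := by
  induction k with
  | zero => simp [cu]
  | succ k ih =>
    have h : 2 * k % 4 = 0 ∨ 2 * k % 4 = 2 := by omega
    have h2 : (2 * (k + 1)) % 4 = (2 * k % 4 + 2) % 4 := by omega
    rcases h with h | h <;>
      simp only [cu, h2, h] at ih ⊢ <;> norm_num at ih ⊢ <;>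
      rw [pow_succ] <;> linarith [ih]

lemma cv_two_mul (k : ℕ) : cv (2 * k) = 0 := by
  have h : 2 * k % 4 = 0 ∨ 2 * k % 4 = 2 := by omega
  rcases h with h | h <;> simp [cv, h]

lemma hasDerivAt_lead {a b : ℝ} (hs : a ^ 2 + b ^ 2 ≤ 1 / 4) (n : ℕ) (θ : ℝ) :
    HasDerivAt (fun φ => (cu n * uu a b φ + cv n * vv a b φ) / DD a b φ)
      ((cu (n + 1) * uu a b θ + cv (n + 1) * vv a b θ) / DD a b θ
        + (Tm a b (cu n, 1, 1, 3) θ + Tm a b (cv n, 0, 2, 3) θ)) θ := by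
  have h := (((hasDerivAt_uu a b θ).const_mul (cu n)).add
      ((hasDerivAt_vv a b θ).const_mul (cv n))).div (hasDerivAt_DD hs θ) (DD_ne hs θ)
  refine h.congr_deriv ?_
  simp only [Pi.add_apply]
  rw [cu_succ, cv_succ]
  have hD := DD_ne hs θ
  simp only [Tm]
  field_simp
  ring

lemma rep (n : ℕ) (hn : 1 ≤ n) : ∃ l : List (ℝ × ℕ × ℕ × ℕ),
    (∀ t ∈ l, 2 ≤ t.2.1 + t.2.2.1) ∧
    ∀ a b : ℝ, a ^ 2 + b ^ 2 ≤ 1 / 4 → ∀ θ : ℝ,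
      iteratedDeriv n (DD a b) θ =
        (cu n * uu a b θ + cv n * vv a b θ) / DD a b θ
          + (l.map (fun t => Tm a b t θ)).sum := by
  induction n, hn using Nat.le_induction with
  | base =>
    refine ⟨[], by simp, fun a b hs θ => ?_⟩
    rw [iteratedDeriv_one, (hasDerivAt_DD hs θ).deriv]
    simp [cu, cv]
  | succ n hn ih =>
    obtain ⟨l, hl, hrep⟩ := ih
    refine ⟨(cu n, 1, 1, 3) :: (cv n, 0, 2, 3) :: l.flatMap step, ?_, ?_⟩
    · intro t ht
      simp only [List.mem_cons] at ht
      rcases ht with rfl | rfl | ht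
      · norm_num
      · norm_num
      · obtain ⟨t₀, ht₀, hmem⟩ := List.mem_flatMap.1 ht
        exact step_inv hmem (hl t₀ ht₀)
    · intro a b hs θ
      have hfun : iteratedDeriv n (DD a b) = fun φ =>
          (cu n * uu a b φ + cv n * vv a b φ) / DD a b φ
            + (l.map (fun t => Tm a b t φ)).sum := funext (hrep a b hs)
      rw [iteratedDeriv_succ, hfun]
      rw [(show HasDerivAt (fun φ => (cu n * uu a b φ + cv n * vv a b φ) / DD a b φ + (l.map (fun t => Tm a b t φ)).sum) _ θ from (hasDerivAt_lead hs n θ).add (hasDerivAt_sum hs l θ)).deriv]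
      simp only [List.map_cons, List.sum_cons]
      ring

lemma Tm_bound {a b : ℝ} (hs : a ^ 2 + b ^ 2 ≤ 1 / 4) (t : ℝ × ℕ × ℕ × ℕ)
    (ht : 2 ≤ t.2.1 + t.2.2.1) (θ : ℝ) :
    |Tm a b t θ| ≤ |t.1| * 2 ^ t.2.2.2 * (a ^ 2 + b ^ 2) := by
  obtain ⟨c, p, q, e⟩ := t
  simp only at ht
  have hs0 : (0 : ℝ) ≤ a ^ 2 + b ^ 2 := by positivity
  set ε := Real.sqrt (a ^ 2 + b ^ 2) with hε
  have hε0 : 0 ≤ ε := Real.sqrt_nonneg _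
  have hε1 : ε ≤ 1 / 2 := sqrt_s_le hs
  have hε2 : ε ^ 2 = a ^ 2 + b ^ 2 := Real.sq_sqrt hs0
  have hu := abs_uu_le a b θ
  have hv := abs_vv_le a b θ
  have hD := DD_ge hs θ
  have hDpos := DD_pos hs θ
  have hnum : |c * uu a b θ ^ p * vv a b θ ^ q| ≤ |c| * (a ^ 2 + b ^ 2) := by
    rw [abs_mul, abs_mul, abs_pow, abs_pow]
    have h1 : |uu a b θ| ^ p * |vv a b θ| ^ q ≤ ε ^ p * ε ^ q := by
      apply mul_le_mul (pow_le_pow_left₀ (abs_nonneg _) hu p)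
        (pow_le_pow_left₀ (abs_nonneg _) hv q) (by positivity) (by positivity)
    have h2 : ε ^ p * ε ^ q = ε ^ (p + q) := (pow_add ε p q).symm
    have h3 : ε ^ (p + q) ≤ ε ^ 2 := pow_le_pow_of_le_one hε0 (by linarith) ht
    calc |c| * |uu a b θ| ^ p * |vv a b θ| ^ q
        = |c| * (|uu a b θ| ^ p * |vv a b θ| ^ q) := by ring
      _ ≤ |c| * (ε ^ p * ε ^ q) := by
          exact mul_le_mul_of_nonneg_left h1 (abs_nonneg c)
      _ = |c| * ε ^ (p + q) := by rw [h2]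
      _ ≤ |c| * ε ^ 2 := mul_le_mul_of_nonneg_left h3 (abs_nonneg c)
      _ = |c| * (a ^ 2 + b ^ 2) := by rw [hε2]
  have hden : ((1 : ℝ) / 2) ^ e ≤ DD a b θ ^ e := pow_le_pow_left₀ (by norm_num) hD e
  have : |Tm a b (c, p, q, e) θ| = |c * uu a b θ ^ p * vv a b θ ^ q| / DD a b θ ^ e := by
    rw [Tm, abs_div, abs_of_pos (by positivity : (0:ℝ) < DD a b θ ^ e)]
  rw [this]
  calc |c * uu a b θ ^ p * vv a b θ ^ q| / DD a b θ ^ e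
      ≤ (|c| * (a ^ 2 + b ^ 2)) / ((1 : ℝ) / 2) ^ e :=
        div_le_div₀ (by positivity) hnum (by positivity) hden
    _ = |c| * 2 ^ e * (a ^ 2 + b ^ 2) := by
        rw [one_div, inv_pow]; field_simp

lemma sum_bound {a b : ℝ} (hs : a ^ 2 + b ^ 2 ≤ 1 / 4) (l : List (ℝ × ℕ × ℕ × ℕ))
    (hl : ∀ t ∈ l, 2 ≤ t.2.1 + t.2.2.1) (θ : ℝ) :
    |(l.map (fun t => Tm a b t θ)).sum|
      ≤ (l.map (fun t => |t.1| * 2 ^ t.2.2.2)).sum * (a ^ 2 + b ^ 2) := by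
  induction l with
  | nil => simp
  | cons t l ih =>
    simp only [List.map_cons, List.sum_cons]
    have h1 := Tm_bound hs t (hl t (List.mem_cons_self)) θ
    have h2 := ih (fun t' ht' => hl t' (List.mem_cons_of_mem t ht'))
    calc |Tm a b t θ + (l.map (fun t => Tm a b t θ)).sum|
        ≤ |Tm a b t θ| + |(l.map (fun t => Tm a b t θ)).sum| := abs_add_le _ _
      _ ≤ |t.1| * 2 ^ t.2.2.2 * (a ^ 2 + b ^ 2)
            + (l.map (fun t => |t.1| * 2 ^ t.2.2.2)).sum * (a ^ 2 + b ^ 2) :=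
          add_le_add h1 h2
      _ = (|t.1| * 2 ^ t.2.2.2 + (l.map (fun t => |t.1| * 2 ^ t.2.2.2)).sum)
            * (a ^ 2 + b ^ 2) := by ring

lemma key (k : ℕ) (hk : 1 ≤ k) : ∃ C : ℝ, 0 < C ∧ ∀ a b : ℝ, a ^ 2 + b ^ 2 ≤ 1 / 4 → ∀ θ : ℝ,
    |iteratedDeriv (2 * k) (DD a b) θ - (-(-1 : ℝ) ^ k * uu a b θ)|
      ≤ C * (a ^ 2 + b ^ 2) := by
  obtain ⟨l, hl, hrep⟩ := rep (2 * k) (by omega)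
  set K := (l.map (fun t => |t.1| * 2 ^ t.2.2.2)).sum with hK
  have hK0 : 0 ≤ K := by
    apply List.sum_nonneg
    intro x hx
    simp only [List.mem_map] at hx
    obtain ⟨t, _, rfl⟩ := hx
    positivity
  refine ⟨5 + K, by linarith, fun a b hs θ => ?_⟩
  have hs0 : (0 : ℝ) ≤ a ^ 2 + b ^ 2 := by positivity
  set ε := Real.sqrt (a ^ 2 + b ^ 2) with hε
  have hε0 : 0 ≤ ε := Real.sqrt_nonneg _
  have hε1 : ε ≤ 1 / 2 := sqrt_s_le hs
  have hε2 : ε ^ 2 = a ^ 2 + b ^ 2 := Real.sq_sqrt hs0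
  have hu := abs_uu_le a b θ
  have hD := DD_ge hs θ
  have hDpos := DD_pos hs θ
  rw [hrep a b hs θ, cu_two_mul, cv_two_mul]
  have hsplit : (-(-1 : ℝ) ^ k * uu a b θ + 0 * vv a b θ) / DD a b θ
        + (l.map (fun t => Tm a b t θ)).sum - (-(-1 : ℝ) ^ k * uu a b θ)
      = (-(-1 : ℝ) ^ k * uu a b θ) * (1 - DD a b θ) / DD a b θ
        + (l.map (fun t => Tm a b t θ)).sum := by
    field_simp
    ring
  rw [hsplit]
  have habs1 : |(-(-1 : ℝ) ^ k * uu a b θ) * (1 - DD a b θ) / DD a b θ|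
      = |uu a b θ| * |1 - DD a b θ| / DD a b θ := by
    rw [abs_div, abs_mul, abs_mul, abs_neg, abs_pow, abs_neg, abs_one,
      one_pow, one_mul, abs_of_pos hDpos]
  have h1D : |1 - DD a b θ| ≤ 2 * ε + (a ^ 2 + b ^ 2) := by
    have e1 : |1 - DD a b θ| * (1 + DD a b θ) = |2 * uu a b θ - (a ^ 2 + b ^ 2)| := by
      rw [← abs_of_pos (by linarith : (0:ℝ) < 1 + DD a b θ), ← abs_mul]
      rw [show (1 - DD a b θ) * (1 + DD a b θ) = 1 - DD a b θ ^ 2 by ring, DD_sq]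
      congr 1
      ring
    have e2 : |2 * uu a b θ - (a ^ 2 + b ^ 2)| ≤ 2 * ε + (a ^ 2 + b ^ 2) := by
      calc |2 * uu a b θ - (a ^ 2 + b ^ 2)| ≤ |2 * uu a b θ| + |a ^ 2 + b ^ 2| := abs_sub _ _
        _ ≤ 2 * ε + (a ^ 2 + b ^ 2) := by
            rw [abs_mul, abs_of_nonneg hs0]
            simp only [abs_two]
            linarith
    calc |1 - DD a b θ| ≤ |1 - DD a b θ| * (1 + DD a b θ) :=
          le_mul_of_one_le_right (abs_nonneg _) (by linarith)
      _ ≤ 2 * ε + (a ^ 2 + b ^ 2) := by rw [e1]; exact e2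
  have hlead : |uu a b θ| * |1 - DD a b θ| / DD a b θ ≤ 5 * (a ^ 2 + b ^ 2) := by
    rw [div_le_iff₀ hDpos]
    have h3 : |uu a b θ| * |1 - DD a b θ| ≤ ε * (2 * ε + (a ^ 2 + b ^ 2)) :=
      mul_le_mul hu h1D (abs_nonneg _) hε0
    nlinarith [abs_nonneg (uu a b θ), abs_nonneg (1 - DD a b θ)]
  calc |(-(-1 : ℝ) ^ k * uu a b θ) * (1 - DD a b θ) / DD a b θ
        + (l.map (fun t => Tm a b t θ)).sum|
      ≤ |(-(-1 : ℝ) ^ k * uu a b θ) * (1 - DD a b θ) / DD a b θ|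
        + |(l.map (fun t => Tm a b t θ)).sum| := abs_add_le _ _
    _ ≤ 5 * (a ^ 2 + b ^ 2) + K * (a ^ 2 + b ^ 2) := by
        rw [habs1]
        exact add_le_add hlead (sum_bound hs l hl θ)
    _ = (5 + K) * (a ^ 2 + b ^ 2) := by ring

lemma contDiff_DD {a b : ℝ} (hs : a ^ 2 + b ^ 2 ≤ 1 / 4) (n : ℕ) :
    ContDiff ℝ n (DD a b) := by
  rw [contDiff_iff_contDiffAt]
  intro θ
  have hw : ContDiff ℝ n (fun φ => (Real.cos φ - a) ^ 2 + (Real.sin φ - b) ^ 2) :=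
    ((Real.contDiff_cos.sub contDiff_const).pow 2).add
      ((Real.contDiff_sin.sub contDiff_const).pow 2)
  have hne : (Real.cos θ - a) ^ 2 + (Real.sin θ - b) ^ 2 ≠ 0 := by
    have := w_ge hs θ; linarith
  exact (Real.contDiffAt_sqrt hne).comp θ hw.contDiffAt

lemma itd_cmul {n : ℕ} {c : ℝ} {f : ℝ → ℝ} (h : ContDiff ℝ n f) (θ : ℝ) :
    iteratedDeriv n (fun x => c * f x) θ = c * iteratedDeriv n f θ := by
  have : (fun x => c * f x) = c • f := by funext x; simp [smul_eq_mul]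
  rw [this, iteratedDeriv_eq_iteratedFDeriv, iteratedFDeriv_const_smul_apply h.contDiffAt]
  simp [iteratedDeriv_eq_iteratedFDeriv]

theorem even_derivatives_of_distance (k : ℕ) (hk : 1 ≤ k) :
    ∃ C : ℝ, 0 < C ∧ ∀ (R₀ x_ref y_ref : ℝ), 0 < R₀ →
      Real.sqrt (x_ref ^ 2 + y_ref ^ 2) ≤ R₀ / 2 → ∀ θ : ℝ,
      |iteratedDeriv (2 * k)
          (fun φ => Real.sqrt ((R₀ * Real.cos φ - x_ref) ^ 2 + (R₀ * Real.sin φ - y_ref) ^ 2)) θ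
        - (-(-1 : ℝ) ^ k * (x_ref * Real.cos θ + y_ref * Real.sin θ))|
      ≤ C * (x_ref ^ 2 + y_ref ^ 2) / R₀ := by
  obtain ⟨C, hC, hbound⟩ := key k hk
  refine ⟨C, hC, fun R₀ x y hR hxy θ => ?_⟩
  set a := x / R₀ with ha
  set b := y / R₀ with hb
  have hxy2 : x ^ 2 + y ^ 2 ≤ R₀ ^ 2 / 4 := by
    have h1 : x ^ 2 + y ^ 2 = Real.sqrt (x ^ 2 + y ^ 2) ^ 2 :=
      (Real.sq_sqrt (by positivity)).symm
    have h2 : Real.sqrt (x ^ 2 + y ^ 2) ^ 2 ≤ (R₀ / 2) ^ 2 :=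
      pow_le_pow_left₀ (Real.sqrt_nonneg _) hxy 2
    rw [h1]; nlinarith
  have hs : a ^ 2 + b ^ 2 ≤ 1 / 4 := by
    rw [ha, hb, div_pow, div_pow, ← add_div, div_le_iff₀ (by positivity)]
    nlinarith
  have hsval : a ^ 2 + b ^ 2 = (x ^ 2 + y ^ 2) / R₀ ^ 2 := by
    rw [ha, hb]; field_simp
  have hfeq : (fun φ => Real.sqrt ((R₀ * Real.cos φ - x) ^ 2 + (R₀ * Real.sin φ - y) ^ 2))
      = fun φ => R₀ * DD a b φ := by
    funext φ
    have hid : (R₀ * Real.cos φ - x) ^ 2 + (R₀ * Real.sin φ - y) ^ 2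
        = R₀ ^ 2 * ((Real.cos φ - a) ^ 2 + (Real.sin φ - b) ^ 2) := by
      rw [ha, hb]; field_simp
    rw [hid, DD, Real.sqrt_mul (sq_nonneg _), Real.sqrt_sq hR.le]
  have hux : x * Real.cos θ + y * Real.sin θ = R₀ * uu a b θ := by
    rw [uu, ha, hb]; field_simp
  rw [hfeq, itd_cmul (contDiff_DD hs (2 * k)) θ, hux]
  have heq : R₀ * iteratedDeriv (2 * k) (DD a b) θ - -(-1 : ℝ) ^ k * (R₀ * uu a b θ)
      = R₀ * (iteratedDeriv (2 * k) (DD a b) θ - -(-1 : ℝ) ^ k * uu a b θ) := by ring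
  rw [heq, abs_mul, abs_of_pos hR]
  calc R₀ * |iteratedDeriv (2 * k) (DD a b) θ - -(-1 : ℝ) ^ k * uu a b θ|
      ≤ R₀ * (C * (a ^ 2 + b ^ 2)) :=
        mul_le_mul_of_nonneg_left (hbound a b hs θ) hR.le
    _ = C * (x ^ 2 + y ^ 2) / R₀ := by
        rw [hsval]; field_simp
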